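/- Let k and n be integers with k/2 − 1 < n ≤ k − 3 (so k ≥ 5). Then: (i) the mixing density h(v) = (v+1)^{k/2−2−n} satisfies ∫₀^∞ h(v) dv < ∞, so the corresponding variance-mixture-of-normals prior on ℝ^k is proper; and (ii) the function m : ℝ^k → ℝ defined by m(x) = ∫₀^∞ (v+1)^{−2−n} · exp(−‖x‖²/(2(1+v))) dv is positive, and satisfies Δ√(m)(x) ≤ 0 for every x ∈ ℝ^k with x ≠ 0. -/

import Mathlib

open Real MeasureTheory

noncomputable def II (m : ℕ) (t : ℝ) : ℝ := ∫ u in (0:ℝ)..1, u ^ m * Real.exp (-t * u)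

lemma II_cont (m : ℕ) (t : ℝ) : Continuous (fun u : ℝ => u ^ m * Real.exp (-t * u)) := by
  continuity

lemma II_intble (m : ℕ) (t : ℝ) : IntervalIntegrable (fun u : ℝ => u ^ m * Real.exp (-t * u)) volume 0 1 :=
  (II_cont m t).intervalIntegrable 0 1

lemma II_pos (m : ℕ) (t : ℝ) : 0 < II m t := by
  apply intervalIntegral.intervalIntegral_pos_of_pos_on (II_intble m t) _ one_pos
  intro u hu
  exact mul_pos (pow_pos hu.1 m) (Real.exp_pos _)

lemma II_mono (m : ℕ) (t : ℝ) : II (m+1) t ≤ II m t := by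
  apply intervalIntegral.integral_mono_on one_pos.le (II_intble _ t) (II_intble _ t)
  intro u hu
  have h1 : u ^ (m+1) ≤ u ^ m := pow_le_pow_of_le_one hu.1 hu.2 (Nat.le_succ m)
  exact mul_le_mul_of_nonneg_right h1 (Real.exp_pos _).le

lemma II_parts (m : ℕ) (t : ℝ) :
    t * II (m+1) t = -Real.exp (-t) + (m+1) * II m t := by
  have key : ∫ u in (0:ℝ)..1,
      (t * (u ^ (m+1) * Real.exp (-t*u)) - (m+1) * (u ^ m * Real.exp (-t*u)))
      = -Real.exp (-t) := by
    have : ∀ u ∈ Set.uIcc (0:ℝ) 1, HasDerivAt (fun u : ℝ => -(u ^ (m+1) * Real.exp (-t*u)))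
        (t * (u ^ (m+1) * Real.exp (-t*u)) - (m+1) * (u ^ m * Real.exp (-t*u))) u := by
      intro u _
      have h1 : HasDerivAt (fun u : ℝ => u ^ (m+1)) ((m+1) * u ^ m) u := by
        simpa using (hasDerivAt_pow (m+1) u)
      have h2 : HasDerivAt (fun u : ℝ => Real.exp (-t*u)) (-t * Real.exp (-t*u)) u := by
        have := ((hasDerivAt_id u).const_mul (-t)).exp
        simpa [mul_comm] using this
      have : HasDerivAt (fun u : ℝ => -(u ^ (m+1) * Real.exp (-t*u))) _ u := (h1.mul h2).neg
      convert this using 1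
      ring
    have := intervalIntegral.integral_eq_sub_of_hasDerivAt this ?_
    · simpa using this
    · apply IntervalIntegrable.sub
      · exact (II_intble (m+1) t).const_mul t
      · exact (II_intble m t).const_mul _
  have expand : ∫ u in (0:ℝ)..1,
      (t * (u ^ (m+1) * Real.exp (-t*u)) - (m+1) * (u ^ m * Real.exp (-t*u)))
      = t * II (m+1) t - (m+1) * II m t := by
    rw [intervalIntegral.integral_sub ((II_intble (m+1) t).const_mul t) ((II_intble m t).const_mul _),
      intervalIntegral.integral_const_mul, intervalIntegral.integral_const_mul]
    rfl
  rw [expand] at key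
  linarith

lemma II_hasDeriv (m : ℕ) (t : ℝ) : HasDerivAt (II m) (-(II (m+1) t)) t := by
  have := intervalIntegral.hasDerivAt_integral_of_dominated_loc_of_deriv_le
    (F := fun (s : ℝ) (u : ℝ) => u ^ m * Real.exp (-s * u))
    (F' := fun (s : ℝ) (u : ℝ) => -(u ^ (m+1) * Real.exp (-s * u)))
    (bound := fun _ : ℝ => Real.exp (|t| + 1))
    (a := 0) (b := 1) (x₀ := t) (s := Metric.ball t 1) (Metric.ball_mem_nhds t one_pos)
    ?_ (II_intble m t) ?_ ?_ ?_ ?_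
  · rcases this with ⟨-, hd⟩
    have : (∫ u in (0:ℝ)..1, -(u ^ (m+1) * Real.exp (-t * u))) = -(II (m+1) t) := by
      rw [intervalIntegral.integral_neg]; rfl
    rw [this] at hd
    exact hd
  · filter_upwards with s using ((II_cont m s)).aestronglyMeasurable
  · exact ((II_cont (m+1) t).neg).aestronglyMeasurable
  · apply ae_of_all
    intro u hs s hsball
    rcases hs with ⟨hu0, hu1⟩
    norm_num at hu0 hu1
    rw [Real.norm_eq_abs, abs_neg, abs_mul]
    have hu0' : (0:ℝ) ≤ u := hu0.le
    have h1 : |u ^ (m+1)| ≤ 1 := by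
      rw [abs_of_nonneg (pow_nonneg hu0' _)]
      exact pow_le_one₀ hu0' hu1
    have h2 : |Real.exp (-s * u)| ≤ Real.exp (|t| + 1) := by
      rw [abs_of_pos (Real.exp_pos _)]
      apply Real.exp_le_exp.2
      have hs' : |s| ≤ |t| + 1 := by
        have := mem_ball_iff_norm.1 hsball
        rw [Real.norm_eq_abs] at this
        calc |s| = |t + (s - t)| := by ring_nf
        _ ≤ |t| + |s - t| := abs_add_le _ _
        _ ≤ |t| + 1 := by linarith
      calc -s * u ≤ |s| * u := by
            apply mul_le_mul_of_nonneg_right _ hu0'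
            exact (neg_le_abs s)
        _ ≤ |s| * 1 := by
            apply mul_le_mul_of_nonneg_left hu1 (abs_nonneg s)
        _ ≤ |t| + 1 := by simpa using hs'
    calc |u ^ (m+1)| * |Real.exp (-s*u)| ≤ 1 * Real.exp (|t|+1) :=
          mul_le_mul h1 h2 (abs_nonneg _) one_pos.le
      _ = Real.exp (|t|+1) := one_mul _
  · exact intervalIntegrable_const
  · apply ae_of_all
    intro u hu s hs
    have h1 : HasDerivAt (fun s : ℝ => Real.exp (-s * u)) (-u * Real.exp (-s*u)) s := by
      have : HasDerivAt (fun s : ℝ => -s * u) (-u) s := by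
        simpa using ((hasDerivAt_id s).neg.mul_const u)
      simpa [mul_comm] using this.exp
    have : HasDerivAt (fun s : ℝ => u ^ m * Real.exp (-s * u)) _ s := h1.const_mul (u ^ m)
    refine this.congr_deriv ?_
    ring

lemma image_inv_sub : (fun u : ℝ => u⁻¹ - 1) '' (Set.Ioo 0 1) = Set.Ioi 0 := by
  ext v
  constructor
  · rintro ⟨u, ⟨hu0, hu1⟩, rfl⟩
    have : 1 < u⁻¹ := (one_lt_inv₀ hu0).2 hu1
    simpa using this
  · intro hv
    have hv' : 0 < v := hv
    refine ⟨(1+v)⁻¹, ⟨by positivity, ?_⟩, ?_⟩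
    · rw [inv_lt_one_iff₀]
      right; linarith
    · show ((1+v)⁻¹)⁻¹ - 1 = v
      rw [inv_inv]; ring

lemma subst_lemma (n : ℕ) (s : ℝ) :
    (∫ v in Set.Ioi (0:ℝ), (v + 1) ^ (-(2:ℝ) - n) * Real.exp (-s / (2 * (1 + v))))
      = II n (s / 2) := by
  rw [← image_inv_sub]
  rw [integral_image_eq_integral_abs_deriv_smul measurableSet_Ioo
    (f' := fun u : ℝ => -(u^2)⁻¹) ?_ ?_]
  · have : ∀ u ∈ Set.Ioo (0:ℝ) 1,
        |-(u^2)⁻¹| • ((u⁻¹ - 1 + 1) ^ (-(2:ℝ) - n) * Real.exp (-s / (2 * (1 + (u⁻¹ - 1)))))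
        = u ^ n * Real.exp (-(s/2) * u) := by
      intro u ⟨hu0, hu1⟩
      have hu0' : (0:ℝ) < u := hu0
      rw [smul_eq_mul, abs_neg, abs_inv, abs_of_pos (by positivity)]
      have e1 : u⁻¹ - 1 + 1 = u⁻¹ := by ring
      have e2 : (1 : ℝ) + (u⁻¹ - 1) = u⁻¹ := by ring
      rw [e1, e2]
      have e3 : (u⁻¹ : ℝ) ^ (-(2:ℝ) - n) = u ^ ((2:ℝ) + n) := by
        rw [Real.inv_rpow hu0'.le, ← Real.rpow_neg hu0'.le]
        ring_nf
      have e4 : -s / (2 * u⁻¹) = -(s/2) * u := by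
        field_simp
      rw [e3, e4]
      have e5 : (u:ℝ) ^ ((2:ℝ) + n) = u^2 * u^n := by
        rw [Real.rpow_add hu0', Real.rpow_two, Real.rpow_natCast]
      rw [e5]
      have e6 : -(s/2) * u = -(s*u)/2 := by ring
      rw [e6]
      field_simp
    rw [setIntegral_congr_fun measurableSet_Ioo this]
    rw [← MeasureTheory.integral_Ioc_eq_integral_Ioo, ← intervalIntegral.integral_of_le zero_le_one]
    rfl
  · intro u ⟨hu0, hu1⟩
    have : HasDerivAt (fun u : ℝ => u⁻¹ - 1) (-(u^2)⁻¹) u :=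
      (hasDerivAt_inv (ne_of_gt hu0)).sub_const 1
    exact this.hasDerivWithinAt
  · intro a ⟨ha0, ha1⟩ b ⟨hb0, hb1⟩ hab
    have : (a:ℝ)⁻¹ = b⁻¹ := by dsimp at hab; linarith
    exact inv_injective this

lemma part1 (k n : ℕ) (hlow : (k : ℝ) / 2 - 1 < n) :
    IntegrableOn (fun v : ℝ => (v + 1) ^ ((k : ℝ) / 2 - 2 - n)) (Set.Ioi 0) := by
  set p : ℝ := (k : ℝ) / 2 - 2 - n with hp
  have hp1 : p < -1 := by rw [hp]; linarith
  have h1 : IntegrableOn (fun v : ℝ => (v + 1) ^ p) (Set.Ioc 0 1) := by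
    apply IntegrableOn.mono_set _ Set.Ioc_subset_Icc_self
    apply ContinuousOn.integrableOn_Icc
    apply ContinuousOn.rpow_const
    · fun_prop
    · intro v hv
      left
      have : (0:ℝ) ≤ v := hv.1
      positivity
  have h2 : IntegrableOn (fun v : ℝ => (v + 1) ^ p) (Set.Ioi 1) := by
    have base : IntegrableOn (fun v : ℝ => v ^ p) (Set.Ioi 1) :=
      integrableOn_Ioi_rpow_of_lt hp1 one_pos
    apply Integrable.mono base
    · apply ContinuousOn.aestronglyMeasurable _ measurableSet_Ioi
      apply ContinuousOn.rpow_const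
      · fun_prop
      · intro v hv
        left
        have : (1:ℝ) < v := hv
        positivity
    · filter_upwards [ae_restrict_mem measurableSet_Ioi] with v hv
      have hv1 : (1:ℝ) < v := hv
      rw [Real.norm_eq_abs, Real.norm_eq_abs,
        abs_of_pos (Real.rpow_pos_of_pos (by linarith) p),
        abs_of_pos (Real.rpow_pos_of_pos (by linarith) p)]
      exact Real.rpow_le_rpow_of_nonpos (by linarith) (by linarith) (by linarith)
  have : Set.Ioi (0:ℝ) = Set.Ioc 0 1 ∪ Set.Ioi 1 := by
    rw [Set.Ioc_union_Ioi_eq_Ioi]; norm_num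
  rw [this]
  exact h1.union h2


noncomputable def psid (n : ℕ) (t : ℝ) : ℝ := -(II (n+1) t) / (2 * Real.sqrt (II n t))

noncomputable def psidd (n : ℕ) (t : ℝ) : ℝ :=
  (II (n+2) t * (2 * Real.sqrt (II n t)) - -(II (n+1) t) * (2 * psid n t)) /
    (2 * Real.sqrt (II n t))^2

lemma sqrtII_hasDeriv (n : ℕ) (t : ℝ) :
    HasDerivAt (fun u => Real.sqrt (II n u)) (psid n t) t :=
  (II_hasDeriv n t).sqrt (ne_of_gt (II_pos n t))

lemma psid_hasDeriv (n : ℕ) (t : ℝ) : HasDerivAt (psid n) (psidd n t) t := by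
  have hnum : HasDerivAt (fun u => -(II (n+1) u)) (II (n+2) t) t := by
    have := (II_hasDeriv (n+1) t).neg; rw [neg_neg] at this; exact this
  have hden : HasDerivAt (fun u => 2 * Real.sqrt (II n u)) (2 * psid n t) t :=
    (sqrtII_hasDeriv n t).const_mul 2
  have hne : 2 * Real.sqrt (II n t) ≠ 0 := by
    have := Real.sqrt_pos.2 (II_pos n t); positivity
  exact hnum.div hden hne

lemma final_ineq (n k : ℕ) (hk : (n:ℝ) + 3 ≤ k) (t : ℝ) (ht : 0 < t) :
    (k:ℝ) * psid n t + 2 * t * psidd n t ≤ 0 := by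
  have hA : 0 < II n t := II_pos n t
  have hB : 0 < II (n+1) t := II_pos (n+1) t
  have hC : 0 < II (n+2) t := II_pos (n+2) t
  have hBA : II (n+1) t ≤ II n t := II_mono n t
  have hpart1 : t * II (n+1) t = -Real.exp (-t) + ((n:ℝ)+1) * II n t := by
    have := II_parts n t; push_cast at this ⊢; linarith
  have hpart2 : t * II (n+2) t = -Real.exp (-t) + ((n:ℝ)+2) * II (n+1) t := by
    have := II_parts (n+1) t; push_cast at this ⊢; linarith
  set A := II n t
  set B := II (n+1) t
  set C := II (n+2) t
  set E := Real.exp (-t) with hEdef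
  have hE : 0 < E := Real.exp_pos _
  set S := Real.sqrt A with hS
  have hSpos : 0 < S := Real.sqrt_pos.2 hA
  have hS2 : S^2 = A := Real.sq_sqrt hA.le
  have e3 : 2*t*(2*A*C - B^2) - 2*(k:ℝ)*A*B
      = (2*(n:ℝ)+6-2*k)*(A*B) + 2*E*(B-2*A) := by
    linear_combination (4*A)*hpart2 - (2*B)*hpart1
  have h4 : (2*(n:ℝ)+6-2*k)*(A*B) ≤ 0 :=
    mul_nonpos_of_nonpos_of_nonneg (by linarith) (by positivity)
  have h5 : 2*E*(B-2*A) ≤ 0 :=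
    mul_nonpos_of_nonneg_of_nonpos (by positivity) (by linarith)
  have key : 2*t*(2*A*C - B^2) - 2*(k:ℝ)*A*B ≤ 0 := by linarith [e3]
  have expr : (k:ℝ) * psid n t + 2 * t * psidd n t
      = (2*t*(2*A*C - B^2) - 2*(k:ℝ)*A*B)/(4*A*S) := by
    simp only [psidd, psid]
    rw [← hS, ← hS2]
    field_simp
    ring
  rw [expr]
  exact div_nonpos_of_nonpos_of_nonneg key (by positivity)

/-- The Laplacian of `f : ℝ^k → ℝ` at `x`: the sum of second partial derivatives
in the standard orthonormal coordinate directions. -/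
noncomputable def laplacian {k : ℕ} (f : EuclideanSpace ℝ (Fin k) → ℝ)
    (x : EuclideanSpace ℝ (Fin k)) : ℝ :=
  ∑ i : Fin k,
    fderiv ℝ (fun y => fderiv ℝ f y (EuclideanSpace.single i 1)) x (EuclideanSpace.single i 1)

set_option maxHeartbeats 2000000 in
theorem stmt16 (k n : ℕ) (hlow : (k : ℝ) / 2 - 1 < n) (hhigh : n + 3 ≤ k)
    (h : ℝ → ℝ) (hdef : ∀ v : ℝ, h v = (v + 1) ^ ((k : ℝ) / 2 - 2 - n))
    (m : EuclideanSpace ℝ (Fin k) → ℝ)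
    (hm : ∀ x, m x = ∫ v in Set.Ioi (0 : ℝ),
      (v + 1) ^ (-(2 : ℝ) - n) * Real.exp (-‖x‖ ^ 2 / (2 * (1 + v)))) :
    IntegrableOn h (Set.Ioi (0 : ℝ)) ∧
    (∀ x : EuclideanSpace ℝ (Fin k), 0 < m x) ∧
    (∀ x : EuclideanSpace ℝ (Fin k), x ≠ 0 →
      laplacian (fun y => Real.sqrt (m y)) x ≤ 0) := by
  have hmII : ∀ x : EuclideanSpace ℝ (Fin k), m x = II n (‖x‖ ^ 2 / 2) := by
    intro x
    rw [hm x, subst_lemma n (‖x‖ ^ 2)]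
  refine ⟨?_, ?_, ?_⟩
  · have := part1 k n hlow
    apply this.congr_fun _ measurableSet_Ioi
    intro v _
    rw [hdef]
  · intro x
    rw [hmII]
    exact II_pos n _
  · intro x hx
    have hxn : 0 < ‖x‖ := norm_pos_iff.mpr hx
    have ht : 0 < ‖x‖^2 := by positivity
    -- global first derivative of sqrt ∘ m
    have hF : ∀ y : EuclideanSpace ℝ (Fin k),
        HasFDerivAt (fun z => Real.sqrt (m z))
          ((psid n (‖y‖^2/2) * (1/2)) • ((2:ℕ) • innerSL ℝ y)) y := by
      intro y
      have h1 : HasFDerivAt (fun z : EuclideanSpace ℝ (Fin k) => ‖z‖^2)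
          ((2:ℕ) • innerSL ℝ y) y := (hasStrictFDerivAt_norm_sq y).hasFDerivAt
      have h2 : HasDerivAt (fun s : ℝ => Real.sqrt (II n (s/2)))
          (psid n (‖y‖^2/2) * (1/2)) (‖y‖^2) := by
        have ha : HasDerivAt (fun s : ℝ => s/2) (1/2) (‖y‖^2) :=
          (hasDerivAt_id _).div_const 2
        exact HasDerivAt.comp (h₂ := fun u => Real.sqrt (II n u)) (h := fun s : ℝ => s/2)
          (‖y‖^2) (sqrtII_hasDeriv n (‖y‖^2/2)) ha
      have h3 := h2.comp_hasFDerivAt y h1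
      have funeq : (fun z => Real.sqrt (m z))
          = ((fun s : ℝ => Real.sqrt (II n (s/2))) ∘ fun z : EuclideanSpace ℝ (Fin k) => ‖z‖^2) := by
        funext z
        simp [Function.comp, hmII z]
      rw [funeq]
      exact h3
    have hfd1 : ∀ (y : EuclideanSpace ℝ (Fin k)) (i : Fin k),
        fderiv ℝ (fun z => Real.sqrt (m z)) y (EuclideanSpace.single i 1)
          = psid n (‖y‖^2/2) * (1/2) * (2 * y i) := by
      intro y i
      rw [(hF y).fderiv]
      have : (innerSL ℝ y) (EuclideanSpace.single i (1:ℝ)) = y i := by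
        simp [EuclideanSpace.inner_single_right]
      simp [this]
    -- second derivatives
    have hsecond : ∀ i : Fin k,
        fderiv ℝ (fun y => fderiv ℝ (fun z => Real.sqrt (m z)) y (EuclideanSpace.single i 1)) x
          (EuclideanSpace.single i 1)
        = psid n (‖x‖^2/2) + psidd n (‖x‖^2/2) * (x i)^2 := by
      intro i
      have funeq2 : (fun y : EuclideanSpace ℝ (Fin k) =>
            fderiv ℝ (fun z => Real.sqrt (m z)) y (EuclideanSpace.single i 1))
          = fun y => (psid n (‖y‖^2/2) * (1/2)) * (2 * y i) := by
        funext y; rw [hfd1 y i]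
      rw [funeq2]
      have hc : HasFDerivAt (fun y : EuclideanSpace ℝ (Fin k) => psid n (‖y‖^2/2) * (1/2))
          ((psidd n (‖x‖^2/2) * (1/2) * (1/2)) • ((2:ℕ) • innerSL ℝ x)) x := by
        have h1 : HasFDerivAt (fun z : EuclideanSpace ℝ (Fin k) => ‖z‖^2)
            ((2:ℕ) • innerSL ℝ x) x := (hasStrictFDerivAt_norm_sq x).hasFDerivAt
        have h2 : HasDerivAt (fun s : ℝ => psid n (s/2) * (1/2))
            (psidd n (‖x‖^2/2) * (1/2) * (1/2)) (‖x‖^2) := by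
          have ha : HasDerivAt (fun s : ℝ => s/2) (1/2) (‖x‖^2) :=
            (hasDerivAt_id _).div_const 2
          exact (HasDerivAt.comp (h₂ := psid n) (h := fun s : ℝ => s/2)
            (‖x‖^2) (psid_hasDeriv n (‖x‖^2/2)) ha).mul_const (1/2)
        exact h2.comp_hasFDerivAt x h1
      have hd : HasFDerivAt (fun y : EuclideanSpace ℝ (Fin k) => 2 * y i)
          ((2:ℝ) • (EuclideanSpace.proj i : EuclideanSpace ℝ (Fin k) →L[ℝ] ℝ)) x := by
        exact (EuclideanSpace.proj i : EuclideanSpace ℝ (Fin k) →L[ℝ] ℝ).hasFDerivAt.const_mul 2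
      have hprod := hc.mul hd
      rw [(show HasFDerivAt (fun y : EuclideanSpace ℝ (Fin k) => psid n (‖y‖^2/2) * (1/2) * (2 * y i)) _ x from hprod).fderiv]
      have e1 : (innerSL ℝ x) (EuclideanSpace.single i (1:ℝ)) = x i := by
        simp [EuclideanSpace.inner_single_right]
      have e2 : (EuclideanSpace.proj i : EuclideanSpace ℝ (Fin k) →L[ℝ] ℝ)
          (EuclideanSpace.single i (1:ℝ)) = 1 := by
        simp
      simp [e1, e2]
      ring
    unfold laplacian
    have hsum : ∑ i : Fin k,
        fderiv ℝ (fun y => fderiv ℝ (fun z => Real.sqrt (m z)) y (EuclideanSpace.single i 1)) x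
          (EuclideanSpace.single i 1)
        = (k:ℝ) * psid n (‖x‖^2/2) + psidd n (‖x‖^2/2) * ‖x‖^2 := by
      rw [Finset.sum_congr rfl (fun i _ => hsecond i)]
      rw [Finset.sum_add_distrib, Finset.sum_const, ← Finset.mul_sum]
      have hnorm : ∑ i : Fin k, (x i)^2 = ‖x‖^2 := by
        rw [PiLp.norm_sq_eq_of_L2]
        congr 1
        funext i
        rw [Real.norm_eq_abs, sq_abs]
      simp [hnorm, nsmul_eq_mul]
    rw [hsum]
    have := final_ineq n k (by exact_mod_cast hhigh) (‖x‖^2/2) (by positivity)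
    calc (k:ℝ) * psid n (‖x‖^2/2) + psidd n (‖x‖^2/2) * ‖x‖^2
        = (k:ℝ) * psid n (‖x‖^2/2) + 2 * (‖x‖^2/2) * psidd n (‖x‖^2/2) := by ring
      _ ≤ 0 := this
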